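/- (Nonconvex Jensen inequality.) Let u : ℝ^d → ℝ be differentiable with L-Lipschitz gradient, let w_1,…,w_m be nonnegative reals with ∑_{i=1}^m w_i = 1, and let x_1,…,x_m ∈ ℝ^d. Then u(∑_{i=1}^m w_i x_i) ≤ ∑_{i=1}^m w_i u(x_i) + (L/2)·∑_{i=1}^m ∑_{j=1}^m w_i w_j ‖x_j − x_i‖². -/

import Mathlib

open Finset

open intervalIntegral in
lemma descent6 {d : ℕ} (u : EuclideanSpace ℝ (Fin d) → ℝ) (L : ℝ)
    (hdiff : Differentiable ℝ u)
    (hlip : ∀ a b : EuclideanSpace ℝ (Fin d), ‖gradient u a - gradient u b‖ ≤ L * ‖a - b‖)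
    (a b : EuclideanSpace ℝ (Fin d)) :
    u a + (inner ℝ (gradient u a) (b - a) : ℝ) - L / 2 * ‖b - a‖ ^ 2 ≤ u b := by
  set v := b - a with hv
  -- gradient is continuous
  have hgc : Continuous (gradient u) := by
    refine (LipschitzWith.of_dist_le_mul (K := ⟨max L 0, le_max_right _ _⟩) ?_).continuous
    intro p q
    simp only [dist_eq_norm]
    calc ‖gradient u p - gradient u q‖ ≤ L * ‖p - q‖ := hlip p q
      _ ≤ max L 0 * ‖p - q‖ :=
        mul_le_mul_of_nonneg_right (le_max_left _ _) (norm_nonneg _)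
  have key : ∀ p, HasFDerivAt u ((InnerProductSpace.toDual ℝ _) (gradient u p)) p := by
    intro p
    have h := (hdiff p).hasFDerivAt
    have : (InnerProductSpace.toDual ℝ _) (gradient u p) = fderiv ℝ u p := by
      simp [gradient]
    rwa [this]
  set φ : ℝ → ℝ := fun t => u (a + t • v) with hφdef
  set ψ : ℝ → ℝ := fun t => (inner ℝ (gradient u (a + t • v)) v : ℝ) with hψdef
  have hφ : ∀ t : ℝ, HasDerivAt φ (ψ t) t := by
    intro t
    have h1 : HasDerivAt (fun t : ℝ => a + t • v) v t := by
      simpa using ((hasDerivAt_id t).smul_const v).const_add a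
    have := (key (a + t • v)).comp_hasDerivAt t h1
    rw [show ψ t = ((InnerProductSpace.toDual ℝ _) (gradient u (a + t • v))) v by
      simp [hψdef, InnerProductSpace.toDual_apply_apply]]
    exact this
  have hψc : Continuous ψ := by
    apply Continuous.inner
    · exact hgc.comp (by continuity)
    · exact continuous_const
  have hint : IntervalIntegrable ψ MeasureTheory.volume 0 1 :=
    hψc.intervalIntegrable _ _
  have heq : ∫ t in (0:ℝ)..1, ψ t = φ 1 - φ 0 :=
    integral_eq_sub_of_hasDerivAt (fun t _ => hφ t) hint
  have hφ1 : φ 1 = u b := by simp [hφdef, hv]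
  have hφ0 : φ 0 = u a := by simp [hφdef]
  have hlb : ∀ t ∈ Set.Icc (0:ℝ) 1,
      (inner ℝ (gradient u a) v : ℝ) - L * ‖v‖ ^ 2 * t ≤ ψ t := by
    intro t ht
    have h1 : (inner ℝ (gradient u a) v : ℝ) - ψ t
        = (inner ℝ (gradient u a - gradient u (a + t • v)) v : ℝ) := by
      rw [inner_sub_left]
    have h2 : (inner ℝ (gradient u a - gradient u (a + t • v)) v : ℝ)
        ≤ ‖gradient u a - gradient u (a + t • v)‖ * ‖v‖ :=
      real_inner_le_norm _ _
    have h3 : ‖gradient u a - gradient u (a + t • v)‖ ≤ L * (t * ‖v‖) := by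
      have := hlip a (a + t • v)
      simpa [norm_smul, abs_of_nonneg ht.1] using this
    nlinarith [norm_nonneg v]
  have hintlb : IntervalIntegrable
      (fun t => (inner ℝ (gradient u a) v : ℝ) - L * ‖v‖ ^ 2 * t) MeasureTheory.volume 0 1 :=
    (continuous_const.sub (continuous_const.mul continuous_id')).intervalIntegrable _ _
  have hmono : ∫ t in (0:ℝ)..1, ((inner ℝ (gradient u a) v : ℝ) - L * ‖v‖ ^ 2 * t)
      ≤ ∫ t in (0:ℝ)..1, ψ t := by
    apply integral_mono_on (by norm_num) hintlb hint
    exact hlb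
  have hcalc : ∫ t in (0:ℝ)..1, ((inner ℝ (gradient u a) v : ℝ) - L * ‖v‖ ^ 2 * t)
      = (inner ℝ (gradient u a) v : ℝ) - L / 2 * ‖v‖ ^ 2 := by
    rw [integral_sub (f := fun _ => (inner ℝ (gradient u a) v : ℝ)) (g := fun t => L * ‖v‖ ^ 2 * t) (intervalIntegrable_const)
      ((continuous_const.mul continuous_id').intervalIntegrable _ _),
      integral_const, integral_const_mul, integral_id]
    simp only [smul_eq_mul, one_mul]
    ring
  rw [hφ1, hφ0] at heq
  rw [hcalc] at hmono
  linarith [heq ▸ hmono]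

/-- Nonconvex Jensen inequality: if `u : ℝ^d → ℝ` is differentiable with `L`-Lipschitz
gradient, `w i ≥ 0` sum to one, then
`u(∑ i, w i • x i) ≤ ∑ i, w i * u (x i) + (L/2) ∑ i ∑ j, w i w j ‖x j − x i‖²`. -/
theorem stmt6 (d m : ℕ) (u : EuclideanSpace ℝ (Fin d) → ℝ) (L : ℝ)
    (hdiff : Differentiable ℝ u)
    (hlip : ∀ a b : EuclideanSpace ℝ (Fin d), ‖gradient u a - gradient u b‖ ≤ L * ‖a - b‖)
    (w : Fin m → ℝ) (hw : ∀ i, 0 ≤ w i) (hw1 : ∑ i, w i = 1)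
    (x : Fin m → EuclideanSpace ℝ (Fin d)) :
    u (∑ i, w i • x i) ≤
      ∑ i, w i * u (x i) + (L / 2) * ∑ i, ∑ j, w i * w j * ‖x j - x i‖ ^ 2 := by
  set c : EuclideanSpace ℝ (Fin d) := ∑ i, w i • x i with hc
  set g : EuclideanSpace ℝ (Fin d) := gradient u c with hg
  set S : ℝ := ∑ i, w i * ‖x i - c‖ ^ 2 with hS
  have hzero : ∑ i, w i • (x i - c) = 0 := by
    simp only [smul_sub, Finset.sum_sub_distrib, ← Finset.sum_smul, hw1, one_smul]
    rw [← hc, sub_self]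
  -- weighted gradient term vanishes
  have hgi : ∑ i, w i * (inner ℝ g (x i - c) : ℝ) = 0 := by
    have : ∑ i, w i * (inner ℝ g (x i - c) : ℝ) = (inner ℝ g (∑ i, w i • (x i - c)) : ℝ) := by
      rw [inner_sum]
      exact Finset.sum_congr rfl fun i _ => (real_inner_smul_right _ _ _).symm
    rw [this, hzero, inner_zero_right]
  -- descent lemma applied at each point
  have hdesc : ∀ i, u c + (inner ℝ g (x i - c) : ℝ) - L / 2 * ‖x i - c‖ ^ 2 ≤ u (x i) :=
    fun i => descent6 u L hdiff hlip c (x i)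
  have hsum : ∑ i, w i * (u c + (inner ℝ g (x i - c) : ℝ) - L / 2 * ‖x i - c‖ ^ 2)
      ≤ ∑ i, w i * u (x i) :=
    Finset.sum_le_sum fun i _ => mul_le_mul_of_nonneg_left (hdesc i) (hw i)
  have hlhs : ∑ i, w i * (u c + (inner ℝ g (x i - c) : ℝ) - L / 2 * ‖x i - c‖ ^ 2)
      = u c - L / 2 * S := by
    simp only [mul_sub, mul_add, Finset.sum_sub_distrib, Finset.sum_add_distrib,
      ← Finset.sum_mul, hw1, one_mul, hgi, add_zero, hS]
    congr 1
    rw [Finset.mul_sum]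
    exact Finset.sum_congr rfl fun i _ => by ring
  -- 0 ≤ L * S
  have hSnn : 0 ≤ S := Finset.sum_nonneg fun i _ => mul_nonneg (hw i) (sq_nonneg _)
  have hLS : 0 ≤ L * S := by
    by_cases h : S = 0
    · simp [h]
    · have : ∃ i, w i * ‖x i - c‖ ^ 2 ≠ 0 := by
        by_contra hcon
        push_neg at hcon
        exact h (by simp [hS, hcon])
      obtain ⟨i, hi⟩ := this
      have hxne : ‖x i - c‖ ≠ 0 := fun h0 => hi (by rw [h0]; ring)
      have hxpos : 0 < ‖x i - c‖ := lt_of_le_of_ne (norm_nonneg _) (Ne.symm hxne)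
      have hL : 0 ≤ L := by
        have h1 := hlip (x i) c
        nlinarith [norm_nonneg (gradient u (x i) - gradient u c)]
      exact mul_nonneg hL hSnn
  -- double sum identity : T = 2 S
  have hT : ∑ i, ∑ j, w i * w j * ‖x j - x i‖ ^ 2 = 2 * S := by
    have expand : ∀ i j : Fin m, ‖x j - x i‖ ^ 2
        = ‖x j - c‖ ^ 2 - 2 * (inner ℝ (x j - c) (x i - c) : ℝ) + ‖x i - c‖ ^ 2 := by
      intro i j
      rw [show x j - x i = (x j - c) - (x i - c) by abel]
      exact norm_sub_sq_real _ _
    have hin : ∀ i, ∑ j, w j * (inner ℝ (x j - c) (x i - c) : ℝ) = 0 := by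
      intro i
      have : ∑ j, w j * (inner ℝ (x j - c) (x i - c) : ℝ)
          = (inner ℝ (∑ j, w j • (x j - c)) (x i - c) : ℝ) := by
        rw [sum_inner]
        exact Finset.sum_congr rfl fun j _ => (real_inner_smul_left _ _ _).symm
      rw [this, hzero, inner_zero_left]
    calc ∑ i, ∑ j, w i * w j * ‖x j - x i‖ ^ 2
        = ∑ i, (w i * ∑ j, w j * ‖x j - c‖ ^ 2
            - 2 * w i * ∑ j, w j * (inner ℝ (x j - c) (x i - c) : ℝ)
            + w i * ‖x i - c‖ ^ 2 * ∑ j, w j) := by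
          refine Finset.sum_congr rfl fun i _ => ?_
          rw [Finset.mul_sum, Finset.mul_sum, Finset.mul_sum, ← Finset.sum_sub_distrib,
            ← Finset.sum_add_distrib]
          refine Finset.sum_congr rfl fun j _ => ?_
          rw [expand i j]; ring
      _ = 2 * S := by
          simp only [hin, mul_zero, sub_zero, hw1, mul_one, ← hS]
          rw [Finset.sum_add_distrib, ← Finset.sum_mul, hw1, ← hS]
          ring
  rw [hT]
  have := hsum
  rw [hlhs] at this
  nlinarith
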